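/- arXiv:2204.08494 — 2 statements merged into one kernel-verified Lean document; each statement's English description precedes it below -/
import Mathlib

section
/- Let d ≥ 1, let ψ ∈ ℂ^d be a unit vector, and let H = Σ_{a=1}^r h_a H_a where h_a ∈ ℝ and each H_a ∈ M_d(ℂ) is Hermitian. If Cov_ψ(H_a, H) = 0 for every a ∈ {1,…,r}, then ψ satisfies the eigenvalue equation H ψ = ⟨ψ, H ψ⟩ ψ. -/
open Matrix BigOperators

/-- Covariance of two matrices with respect to a state `ψ`:
`Cov_ψ(A,B) = ⟨ψ, A B ψ⟩ − ⟨ψ, A ψ⟩⟨ψ, B ψ⟩`. -/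
noncomputable def Cov {d : ℕ} (ψ : Fin d → ℂ) (A B : Matrix (Fin d) (Fin d) ℂ) : ℂ :=
  star ψ ⬝ᵥ ((A * B) *ᵥ ψ) - (star ψ ⬝ᵥ (A *ᵥ ψ)) * (star ψ ⬝ᵥ (B *ᵥ ψ))

lemma sum_mulVec' {d : ℕ} {ι : Type*} (s : Finset ι) (A : ι → Matrix (Fin d) (Fin d) ℂ)
    (x : Fin d → ℂ) : (∑ a ∈ s, A a) *ᵥ x = ∑ a ∈ s, (A a) *ᵥ x := by
  ext i
  simp [Matrix.mulVec, dotProduct, Finset.sum_mul, Matrix.sum_apply]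
  rw [Finset.sum_comm]

lemma dotProduct_sum' {d : ℕ} {ι : Type*} (s : Finset ι) (v : Fin d → ℂ)
    (f : ι → (Fin d → ℂ)) : v ⬝ᵥ (∑ a ∈ s, f a) = ∑ a ∈ s, v ⬝ᵥ f a := by
  simp [dotProduct, Finset.mul_sum]
  rw [Finset.sum_comm]

lemma cov_sum_left {d r : ℕ} (ψ : Fin d → ℂ) (c : Fin r → ℂ)
    (A : Fin r → Matrix (Fin d) (Fin d) ℂ) (B : Matrix (Fin d) (Fin d) ℂ) :
    Cov ψ (∑ a, c a • A a) B = ∑ a, c a * Cov ψ (A a) B := by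
  unfold Cov
  rw [Finset.sum_mul, sum_mulVec', dotProduct_sum', sum_mulVec', dotProduct_sum',
    Finset.sum_mul, ← Finset.sum_sub_distrib]
  refine Finset.sum_congr rfl fun a _ => ?_
  simp only [smul_mul_assoc, Matrix.smul_mulVec, dotProduct_smul, smul_eq_mul]
  ring

/-- if `H = ∑ a, h a • H a` with real `h a`, Hermitian `H a`, and all
covariances `Cov_ψ(H_a, H)` vanish for a unit vector `ψ`, then `ψ` is an eigenvector
of `H` with eigenvalue `⟨ψ, H ψ⟩`. -/
theorem covar_sufficient_conditions
    (d r : ℕ) (hd : 1 ≤ d) (ψ : Fin d → ℂ) (hψ : star ψ ⬝ᵥ ψ = 1)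
    (h : Fin r → ℝ) (Hterm : Fin r → Matrix (Fin d) (Fin d) ℂ)
    (hHerm : ∀ a, (Hterm a).IsHermitian)
    (H : Matrix (Fin d) (Fin d) ℂ) (hHdef : H = ∑ a, (h a : ℂ) • Hterm a)
    (hcov : ∀ a, Cov ψ (Hterm a) H = 0) :
    H *ᵥ ψ = (star ψ ⬝ᵥ (H *ᵥ ψ)) • ψ := by
  have hH : H.IsHermitian := by
    rw [hHdef]
    unfold Matrix.IsHermitian
    rw [conjTranspose_sum]
    refine Finset.sum_congr rfl fun a _ => ?_
    rw [conjTranspose_smul, (hHerm a).eq]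
    simp
  set E := star ψ ⬝ᵥ (H *ᵥ ψ) with hE
  have hEψ : (star ψ ᵥ* H) ⬝ᵥ ψ = E := (dotProduct_mulVec _ _ _).symm
  have hEstar : star E = E := by
    have h1 : star (H *ᵥ ψ) ⬝ᵥ ψ = star (star ψ ⬝ᵥ (H *ᵥ ψ)) := star_dotProduct _ _
    rw [star_mulVec, hH.eq, hEψ, ← hE] at h1
    exact h1.symm
  have hCovHH : Cov ψ H H = 0 := by
    have hsum : Cov ψ H H = ∑ a, (h a : ℂ) * Cov ψ (Hterm a) H := by
      nth_rewrite 1 [hHdef]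
      rw [cov_sum_left]
    rw [hsum]
    simp [hcov]
  set v := H *ᵥ ψ - E • ψ with hv
  have hkey : star v ⬝ᵥ v = 0 := by
    have expand : star v ⬝ᵥ v = star ψ ⬝ᵥ ((H * H) *ᵥ ψ) - E * E := by
      rw [hv, star_sub, star_smul, sub_dotProduct, dotProduct_sub, dotProduct_sub,
        star_mulVec, hH.eq]
      simp only [dotProduct_smul, smul_dotProduct, smul_eq_mul, hψ, hEstar, ← hE, hEψ]
      rw [← dotProduct_mulVec, mulVec_mulVec]
      ring
    rw [expand]
    have h2 := hCovHH
    unfold Cov at h2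
    rw [← hE] at h2
    linear_combination h2
  have hv0 : v = 0 := by
    open scoped ComplexOrder in
    exact dotProduct_star_self_eq_zero.mp hkey
  exact sub_eq_zero.mp hv0
end

section
/- Let P ∈ M_d(ℂ) be Hermitian with P² = Id, let O ∈ M_d(ℂ), and let φ ∈ ℂ^d. Define f(θ) := ⟨exp(−i(θ/2)P) φ, O exp(−i(θ/2)P) φ⟩ for θ ∈ ℝ. Then f is differentiable and satisfies the parameter-shift rule f′(θ) = ½·( f(θ + π/2) − f(θ − π/2) ) for every θ ∈ ℝ. -/
set_option maxHeartbeats 1000000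

open Matrix BigOperators

lemma exp_involution {d : ℕ} (P : Matrix (Fin d) (Fin d) ℂ) (hP2 : P * P = 1) (z : ℂ) :
    NormedSpace.exp ((-z * Complex.I) • P)
      = Complex.cos z • (1 : Matrix (Fin d) (Fin d) ℂ) - (Complex.sin z * Complex.I) • P := by
  letI : SeminormedRing (Matrix (Fin d) (Fin d) ℂ) := Matrix.linftyOpSemiNormedRing
  letI : NormedRing (Matrix (Fin d) (Fin d) ℂ) := Matrix.linftyOpNormedRing
  letI : NormedAlgebra ℂ (Matrix (Fin d) (Fin d) ℂ) := Matrix.linftyOpNormedAlgebra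
  have hexp := NormedSpace.exp_series_hasSum_exp' (𝕂 := ℂ) ((-z * Complex.I) • P)
  have h2 : (-z * Complex.I) ^ 2 = -(z ^ 2) := by
    rw [mul_pow, Complex.I_sq]; ring
  have he : HasSum (fun k => ((Nat.factorial (2*k) : ℂ)⁻¹) • ((-z * Complex.I) • P) ^ (2*k))
      (Complex.cos z • (1 : Matrix (Fin d) (Fin d) ℂ)) := by
    have h := (Complex.hasSum_cos z).smul_const (1 : Matrix (Fin d) (Fin d) ℂ)
    have hfun : (fun k : ℕ => ((Nat.factorial (2*k) : ℂ)⁻¹) • ((-z * Complex.I) • P) ^ (2*k))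
        = fun k : ℕ => ((-1 : ℂ) ^ k * z ^ (2*k) / (Nat.factorial (2*k) : ℂ)) • (1 : Matrix (Fin d) (Fin d) ℂ) := by
      funext k
      rw [smul_pow, pow_mul P, pow_two, hP2, one_pow, smul_smul]
      congr 1
      rw [pow_mul, h2, neg_pow, ← pow_mul, div_eq_mul_inv]
      ring
    rw [hfun]
    exact h
  have ho : HasSum (fun k => ((Nat.factorial (2*k+1) : ℂ)⁻¹) • ((-z * Complex.I) • P) ^ (2*k+1))
      ((-Complex.I * Complex.sin z) • P) := by
    have h := ((Complex.hasSum_sin z).mul_left (-Complex.I)).smul_const P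
    have hfun : (fun k : ℕ => ((Nat.factorial (2*k+1) : ℂ)⁻¹) • ((-z * Complex.I) • P) ^ (2*k+1))
        = fun k : ℕ => (-Complex.I * ((-1 : ℂ) ^ k * z ^ (2*k+1) / (Nat.factorial (2*k+1) : ℂ))) • P := by
      funext k
      rw [smul_pow, pow_succ P, pow_mul P, pow_two, hP2, one_pow, one_mul, smul_smul]
      congr 1
      rw [pow_succ, pow_mul, h2, neg_pow, ← pow_mul, div_eq_mul_inv]
      ring
    rw [hfun]
    exact h
  have hsum := HasSum.even_add_odd
    (f := fun n => ((Nat.factorial n : ℂ))⁻¹ • ((-z * Complex.I) • P) ^ n) he ho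
  refine hexp.unique ?_
  convert hsum using 1
  case e'_3 => rfl
  case e'_4 => rfl
  rw [sub_eq_add_neg, ← neg_smul]
  congr 1
  ring_nf

/-- The parameter-dependent expectation value
`f(θ) = ⟨exp(−i(θ/2)P) φ, O exp(−i(θ/2)P) φ⟩`. -/
noncomputable def shiftFun {d : ℕ} (P O : Matrix (Fin d) (Fin d) ℂ)
    (φ : Fin d → ℂ) (θ : ℝ) : ℂ :=
  star (NormedSpace.exp ((-((θ : ℂ) / 2) * Complex.I) • P) *ᵥ φ) ⬝ᵥ
    (O *ᵥ (NormedSpace.exp ((-((θ : ℂ) / 2) * Complex.I) • P) *ᵥ φ))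

lemma shiftFun_formula {d : ℕ} (P O : Matrix (Fin d) (Fin d) ℂ)
    (hP2 : P * P = 1) (φ : Fin d → ℂ) (θ : ℝ) :
    shiftFun P O φ θ =
      (star φ ⬝ᵥ (O *ᵥ φ) + star (P *ᵥ φ) ⬝ᵥ (O *ᵥ (P *ᵥ φ))) / 2
      + (Real.cos θ : ℂ) *
          ((star φ ⬝ᵥ (O *ᵥ φ) - star (P *ᵥ φ) ⬝ᵥ (O *ᵥ (P *ᵥ φ))) / 2)
      + (Real.sin θ : ℂ) *
          (Complex.I * (star (P *ᵥ φ) ⬝ᵥ (O *ᵥ φ) - star φ ⬝ᵥ (O *ᵥ (P *ᵥ φ))) / 2) := by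
  have hz : (-((θ : ℂ) / 2) * Complex.I) • P
      = (-(((θ/2 : ℝ)) : ℂ) * Complex.I) • P := by push_cast; ring_nf
  have h2 : (2:ℝ) * (θ/2) = θ := by ring
  have hc := Real.cos_two_mul (θ/2)
  have hs := Real.sin_two_mul (θ/2)
  rw [h2] at hc hs
  have hsc : ((Real.sin (θ/2) : ℂ))^2 + ((Real.cos (θ/2) : ℂ))^2 = 1 := by
    exact_mod_cast Real.sin_sq_add_cos_sq (θ/2)
  rw [shiftFun, hz, exp_involution P hP2, ← Complex.ofReal_cos, ← Complex.ofReal_sin, hc, hs]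
  push_cast [← Complex.ofReal_cos, ← Complex.ofReal_sin]
  simp only [Matrix.sub_mulVec, Matrix.smul_mulVec, Matrix.one_mulVec,
    Matrix.mulVec_sub, Matrix.mulVec_smul, star_sub, star_smul,
    sub_dotProduct, dotProduct_sub, smul_dotProduct,
    dotProduct_smul, smul_eq_mul, star_mul', Complex.star_def,
    Complex.conj_ofReal, Complex.conj_I, Complex.I_sq]
  linear_combination (star (P *ᵥ φ) ⬝ᵥ (O *ᵥ (P *ᵥ φ))) * hsc
    - (((Real.sin (θ/2) : ℂ))^2 * (star (P *ᵥ φ) ⬝ᵥ (O *ᵥ (P *ᵥ φ)))) * Complex.I_sq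

/-- for Hermitian `P` with `P² = Id`, the expectation value
`f(θ) = ⟨exp(−i(θ/2)P) φ, O exp(−i(θ/2)P) φ⟩` is differentiable and obeys the
parameter-shift rule `f′(θ) = ½ (f(θ + π/2) − f(θ − π/2))` for every `θ`. -/
theorem parameter_shift_rule
    (d : ℕ) (P O : Matrix (Fin d) (Fin d) ℂ)
    (hP : P.IsHermitian) (hP2 : P * P = 1) (φ : Fin d → ℂ) :
    ∀ θ : ℝ,
      HasDerivAt (shiftFun P O φ)
        ((1/2 : ℂ) * (shiftFun P O φ (θ + Real.pi / 2)
            - shiftFun P O φ (θ - Real.pi / 2))) θ := by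
  intro θ
  set K0 := (star φ ⬝ᵥ (O *ᵥ φ) + star (P *ᵥ φ) ⬝ᵥ (O *ᵥ (P *ᵥ φ))) / 2 with hK0
  set K1 := (star φ ⬝ᵥ (O *ᵥ φ) - star (P *ᵥ φ) ⬝ᵥ (O *ᵥ (P *ᵥ φ))) / 2 with hK1
  set K2 := Complex.I * (star (P *ᵥ φ) ⬝ᵥ (O *ᵥ φ) - star φ ⬝ᵥ (O *ᵥ (P *ᵥ φ))) / 2 with hK2
  have hfun : shiftFun P O φ = fun t : ℝ => K0 + (Real.cos t : ℂ) * K1 + (Real.sin t : ℂ) * K2 :=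
    funext fun t => shiftFun_formula P O hP2 φ t
  rw [hfun]
  have h1 : HasDerivAt (fun t : ℝ => ((Real.cos t : ℂ))) (-(Real.sin θ : ℂ)) θ := by
    simpa using (Real.hasDerivAt_cos θ).ofReal_comp
  have h2 : HasDerivAt (fun t : ℝ => ((Real.sin t : ℂ))) (Real.cos θ) θ :=
    (Real.hasDerivAt_sin θ).ofReal_comp
  have hd := ((hasDerivAt_const θ K0).add (h1.mul_const K1)).add (h2.mul_const K2)
  convert hd using 1
  case e'_4 => rfl
  case e'_8 => rfl
  simp only [Real.cos_add_pi_div_two, Real.sin_add_pi_div_two, Real.cos_sub_pi_div_two,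
    Real.sin_sub_pi_div_two]
  push_cast
  ring
end
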